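/- arXiv:1411.6301 — 4 statements merged into one kernel-verified Lean document; each statement's English description precedes it below -/
import Mathlib

section
/- Let N ≥ 1 be a natural number and let z, y be complex numbers with z^N = 1, y^N = 1 and z ≠ y. Then |z + y| ≤ 2·cos(π/N). -/
open Real Complex

lemma cos_pi_mul_div_abs_le (N k : ℕ) (hk1 : 1 ≤ k) (hkN : k < N) :
    |Real.cos (Real.pi * k / N)| ≤ Real.cos (Real.pi / N) := by
  have hN0 : (0:ℝ) < N := by have : 0 < N := lt_of_le_of_lt (Nat.zero_le k) hkN; exact_mod_cast this
  have hkr : (1:ℝ) ≤ k := by exact_mod_cast hk1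
  have h1 : Real.pi / N ≤ Real.pi * k / N := by
    gcongr
    nlinarith [Real.pi_pos]
  have h2 : Real.pi * k / N ≤ Real.pi - Real.pi / N := by
    have hk : (k:ℝ) + 1 ≤ N := by exact_mod_cast hkN
    have hr : Real.pi - Real.pi / N = Real.pi * ((N:ℝ) - 1) / N := by
      field_simp
    rw [hr]
    gcongr
    linarith
  have hp0 : 0 ≤ Real.pi / N := by positivity
  rw [abs_le]
  constructor
  · have := Real.cos_le_cos_of_nonneg_of_le_pi (by positivity : (0:ℝ) ≤ Real.pi * k / N)
      (by linarith : Real.pi - Real.pi / N ≤ Real.pi) h2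
    rw [Real.cos_pi_sub] at this
    linarith
  · exact Real.cos_le_cos_of_nonneg_of_le_pi hp0 (by linarith) h1

/-- If `z` and `y` are distinct `N`-th roots of unity (`N ≥ 1`), then
`|z + y| ≤ 2 cos (π / N)`. -/
theorem roots_of_unity_sum_abs_le (N : ℕ) (hN : 1 ≤ N) (z y : ℂ)
    (hz : z ^ N = 1) (hy : y ^ N = 1) (hne : z ≠ y) :
    ‖z + y‖ ≤ 2 * Real.cos (Real.pi / N) := by
  have hN0 : N ≠ 0 := by omega
  have : NeZero N := ⟨hN0⟩
  have hy0 : y ≠ 0 := by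
    intro h; rw [h, zero_pow hN0] at hy; exact zero_ne_one hy
  have hya : ‖y‖ = 1 := Complex.norm_eq_one_of_pow_eq_one hy hN0
  set w := z / y with hw
  have hwN : w ^ N = 1 := by
    rw [hw, div_pow, hz, hy, div_one]
  have hw1 : w ≠ 1 := by
    intro h
    apply hne
    rw [hw, div_eq_one_iff_eq hy0] at h
    exact h
  obtain ⟨k, hkN, hkw⟩ := (Complex.isPrimitiveRoot_exp N hN0).eq_pow_of_pow_eq_one hwN
  have hk1 : 1 ≤ k := by
    rcases Nat.eq_zero_or_pos k with h | h
    · exfalso; apply hw1; rw [← hkw, h, pow_zero]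
    · exact h
  set θ : ℝ := 2 * Real.pi * k / N with hθ
  have hwθ : w = Complex.exp (θ * Complex.I) := by
    rw [← hkw, ← Complex.exp_nat_mul]
    congr 1
    have : (N:ℂ) ≠ 0 := by exact_mod_cast hN0
    rw [hθ]; push_cast; field_simp
  have hsum : ‖z + y‖ = ‖w + 1‖ := by
    have : z + y = y * (w + 1) := by rw [hw, mul_add, mul_div_assoc', mul_comm y z, mul_div_assoc, div_self hy0, mul_one, mul_one]
    rw [this, norm_mul, hya, one_mul]
  have hexp : w + 1 = (Real.cos θ + 1 : ℝ) + (Real.sin θ : ℝ) * Complex.I := by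
    rw [hwθ, Complex.exp_mul_I]
    push_cast
    ring
  have habs : ‖w + 1‖ = 2 * |Real.cos (θ / 2)| := by
    rw [hexp, Complex.norm_add_mul_I]
    have h4 : (Real.cos θ + 1) ^ 2 + Real.sin θ ^ 2 = (2 * |Real.cos (θ / 2)|) ^ 2 := by
      have hc := Real.cos_sq (θ / 2)
      have hs := Real.sin_sq_add_cos_sq θ
      rw [mul_pow, _root_.sq_abs]
      have : 2 * (θ / 2) = θ := by ring
      rw [this] at hc
      linear_combination hs - 4 * hc
    rw [h4, Real.sqrt_sq (by positivity)]
  have hθ2 : θ / 2 = Real.pi * k / N := by rw [hθ]; ring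
  rw [hsum, habs, hθ2]
  have := cos_pi_mul_div_abs_le N k hk1 hkN
  linarith
end

section
/- Let H be a finite abelian group (written multiplicatively) and let c : ℕ → H → ℝ satisfy: c_j(g) ≥ 0 for all j, g; Σ_{g∈H} c_j(g) = 1 for all j; and c_j(g) ≤ c_j(1) for all j and g (the mass at the identity is maximal). Then the following are equivalent: (i) for every character α : H → ℂ with α ≠ 1 and every j₀, the partial products ∏_{j=j₀}^{j₀+d} (Σ_{g∈H} c_j(g)·α(g⁻¹)) tend to 0 in ℂ as d → ∞; (ii) for every character α ≠ 1, the series Σ_j (Σ_{g : α(g) ≠ 1} c_j(g)) of nonnegative reals diverges (the function of j is not summable); (iii) for every maximal proper subgroup K of H, the series Σ_j (Σ_{g ∉ K} c_j(g)) diverges; (iv) for all characters α ≠ β of H, the series Σ_j (Σ_{(g,h) ∈ H×H : α(g·h⁻¹) ≠ β(g·h⁻¹)} c_j(g)·c_j(h)) diverges. -/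
open Filter

open scoped Classical

section Aux

lemma aux_prod_norm_lower {ι : Type*} (s : Finset ι) (f : ι → ℂ) :
    1 - ∑ i ∈ s, ‖1 - f i‖ ≤ ‖∏ i ∈ s, f i‖ := by
  classical
  induction s using Finset.cons_induction with
  | empty => simp
  | cons a s ha ih =>
    rw [Finset.prod_cons, Finset.sum_cons, norm_mul]
    rcases le_or_gt (1 - (‖1 - f a‖ + ∑ i ∈ s, ‖1 - f i‖)) 0 with h | h
    · exact h.trans (by positivity)
    · have hta : (0:ℝ) ≤ ‖1 - f a‖ := norm_nonneg _
      have hs0 : (0:ℝ) ≤ ∑ i ∈ s, ‖1 - f i‖ :=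
        Finset.sum_nonneg fun i _ => norm_nonneg _
      have h1 : ‖(1:ℂ)‖ - ‖f a‖ ≤ ‖1 - f a‖ := norm_sub_norm_le _ _
      rw [norm_one] at h1
      have hfa : 1 - ‖1 - f a‖ ≤ ‖f a‖ := by linarith
      have key : (1 - ‖1 - f a‖) * (1 - ∑ i ∈ s, ‖1 - f i‖) ≤ ‖f a‖ * ‖∏ i ∈ s, f i‖ :=
        mul_le_mul hfa ih (by linarith) (by linarith)
      nlinarith [mul_nonneg hta hs0]

variable {H : Type} [CommGroup H] [Fintype H]

lemma aux_char_norm (α : H →* ℂ) (x : H) : ‖α x‖ = 1 := by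
  have : Nonempty H := ⟨1⟩
  refine Complex.norm_eq_one_of_pow_eq_one ?_ (Fintype.card_ne_zero (α := H))
  rw [← map_pow, pow_card_eq_one, map_one]

lemma aux_re_le (α : H →* ℂ) (x : H) : (α x).re ≤ 1 := by
  have h := Complex.re_le_norm (α x)
  rw [aux_char_norm] at h
  exact h

lemma aux_re_lt (α : H →* ℂ) {x : H} (hx : α x ≠ 1) : (α x).re < 1 := by
  refine lt_of_le_of_ne (aux_re_le α x) fun he => hx ?_
  have hn : Complex.normSq (α x) = 1 := by
    rw [← Complex.sq_norm, aux_char_norm]; norm_num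
  rw [Complex.normSq_apply, he] at hn
  have him : (α x).im = 0 := by
    have h2 : (α x).im * (α x).im = 0 := by linarith
    exact mul_self_eq_zero.mp h2
  exact Complex.ext (by rw [he, Complex.one_re]) (by rw [him, Complex.one_im])

lemma aux_exists_delta (α : H →* ℂ) (hα : α ≠ 1) :
    ∃ δ : ℝ, 0 < δ ∧ ∀ x : H, α x ≠ 1 → δ ≤ 1 - (α x).re := by
  classical
  have hne : ∃ x : H, α x ≠ 1 := by
    by_contra h
    push_neg at h
    exact hα (MonoidHom.ext fun x => by simpa using h x)
  obtain ⟨x₀, hx₀⟩ := hne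
  set s : Finset H := Finset.univ.filter fun x => α x ≠ 1 with hs
  have hsne : s.Nonempty := ⟨x₀, by simp [hs, hx₀]⟩
  refine ⟨s.inf' hsne fun x => 1 - (α x).re, ?_, ?_⟩
  · rw [Finset.lt_inf'_iff]
    intro x hx
    have hx' : α x ≠ 1 := by simpa [hs] using hx
    linarith [aux_re_lt α hx']
  · intro x hx
    exact Finset.inf'_le _ (by simp [hs, hx])

def aux_ker (α : H →* ℂ) : Subgroup H where
  carrier := {g | α g = 1}
  one_mem' := map_one α
  mul_mem' := fun {a b} ha hb => by
    simp only [Set.mem_setOf_eq, map_mul] at *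
    rw [ha, hb, mul_one]
  inv_mem' := fun {a} ha => by
    simp only [Set.mem_setOf_eq] at *
    rw [map_inv, ha, inv_one]

lemma aux_mem_ker {α : H →* ℂ} {g : H} : g ∈ aux_ker α ↔ α g = 1 := Iff.rfl

lemma aux_normSq_bound (c : H → ℝ) (hpos : ∀ g, 0 ≤ c g) (hsum : ∑ g, c g = 1)
    (α : H →* ℂ) {δ : ℝ} (hδ : ∀ x : H, α x ≠ 1 → δ ≤ 1 - (α x).re) :
    c 1 * (δ * ∑ g, if α g ≠ 1 then c g else 0) ≤
      1 - Complex.normSq (∑ g, (c g : ℂ) * α g⁻¹) := by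
  classical
  set S : ℂ := ∑ g, (c g : ℂ) * α g⁻¹ with hS
  have hconj : ∀ h : H, (starRingEnd ℂ) (α h⁻¹) = α h := fun h => by
    rw [map_inv, Complex.inv_eq_conj (aux_char_norm α h),
      Complex.conj_conj]
  have hSconj : (starRingEnd ℂ) S = ∑ h, (c h : ℂ) * α h := by
    rw [hS, map_sum]
    exact Finset.sum_congr rfl fun h _ => by rw [map_mul, Complex.conj_ofReal, hconj]
  have hmul : (Complex.normSq S : ℂ) = ∑ g, ∑ h, ((c g * c h : ℝ) : ℂ) * α (h * g⁻¹) := by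
    rw [← Complex.mul_conj, hSconj, hS, Finset.sum_mul_sum]
    refine Finset.sum_congr rfl fun g _ => Finset.sum_congr rfl fun h _ => ?_
    rw [map_mul]
    push_cast
    ring
  have hre : Complex.normSq S = ∑ g, ∑ h, c g * c h * (α (h * g⁻¹)).re := by
    have h' := congrArg Complex.re hmul
    rw [Complex.ofReal_re] at h'
    rw [h', Complex.re_sum]
    exact Finset.sum_congr rfl fun g _ => by
      rw [Complex.re_sum]
      exact Finset.sum_congr rfl fun h _ => by rw [Complex.re_ofReal_mul]
  have hone : ∑ g : H, ∑ h : H, c g * c h = 1 := by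
    rw [← Finset.sum_mul_sum, hsum, one_mul]
  have expand : ∑ g, ∑ h, c g * c h * (1 - (α (h * g⁻¹)).re)
      = (∑ g : H, ∑ h : H, c g * c h) - ∑ g, ∑ h, c g * c h * (α (h * g⁻¹)).re := by
    rw [← Finset.sum_sub_distrib]
    refine Finset.sum_congr rfl fun g _ => ?_
    rw [← Finset.sum_sub_distrib]
    exact Finset.sum_congr rfl fun h _ => by ring
  have key : 1 - Complex.normSq S = ∑ g, ∑ h, c g * c h * (1 - (α (h * g⁻¹)).re) := by
    rw [expand, hone, hre]
  rw [key]
  have hterm : ∀ g h : H, 0 ≤ c g * c h * (1 - (α (h * g⁻¹)).re) := fun g h =>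
    mul_nonneg (mul_nonneg (hpos g) (hpos h)) (by linarith [aux_re_le α (h * g⁻¹)])
  have h1 : ∑ h, c 1 * c h * (1 - (α (h * 1⁻¹)).re) ≤
      ∑ g, ∑ h, c g * c h * (1 - (α (h * g⁻¹)).re) :=
    Finset.single_le_sum (f := fun g => ∑ h, c g * c h * (1 - (α (h * g⁻¹)).re))
      (fun g _ => Finset.sum_nonneg fun h _ => hterm g h) (Finset.mem_univ 1)
  refine le_trans ?_ h1
  simp only [inv_one, mul_one, Finset.mul_sum]
  refine Finset.sum_le_sum fun h _ => ?_
  by_cases hh : α h = 1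
  · simp [hh, Complex.one_re]
  · simp only [hh, ne_eq, not_false_eq_true, if_true]
    nlinarith [hpos 1, hpos h, hδ h hh, mul_nonneg (mul_nonneg (hpos 1) (hpos h)) (sub_nonneg.mpr (hδ h hh))]

end Aux


open scoped Classical in
/-- Lemma 1.1 (weak ergodicity criterion) for hemicirculant matrices over a finite
abelian group `H`, stated at the level of the coefficient functions `c j : H → ℝ`. -/
theorem weak_ergodicity_criterion {H : Type} [CommGroup H] [Fintype H]
    (c : ℕ → H → ℝ)
    (hpos : ∀ j g, 0 ≤ c j g)
    (hsum : ∀ j, ∑ g, c j g = 1)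
    (hmax : ∀ j g, c j g ≤ c j 1) :
    List.TFAE
      [ -- (i)
        (∀ α : H →* ℂ, α ≠ 1 → ∀ j₀ : ℕ,
          Tendsto (fun d => ∏ j ∈ Finset.Icc j₀ (j₀ + d), ∑ g, (c j g : ℂ) * α g⁻¹)
            atTop (nhds 0)),
        -- (ii)
        (∀ α : H →* ℂ, α ≠ 1 →
          ¬ Summable (fun j => ∑ g, if α g ≠ 1 then c j g else 0)),
        -- (iii)
        (∀ K : Subgroup H, IsCoatom K →
          ¬ Summable (fun j => ∑ g, if g ∈ K then 0 else c j g)),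
        -- (iv)
        (∀ α β : H →* ℂ, α ≠ β →
          ¬ Summable (fun j => ∑ g, ∑ h,
            if α (g * h⁻¹) ≠ β (g * h⁻¹) then c j g * c j h else 0)) ] := by
  have hcard : (0:ℝ) < (Fintype.card H : ℝ) := by
    have : Nonempty H := ⟨1⟩
    exact_mod_cast Fintype.card_pos
  have hc1 : ∀ j, 1 ≤ (Fintype.card H : ℝ) * c j 1 := by
    intro j
    calc (1:ℝ) = ∑ g, c j g := (hsum j).symm
      _ ≤ ∑ _g : H, c j 1 := Finset.sum_le_sum fun g _ => hmax j g
      _ = (Fintype.card H : ℝ) * c j 1 := by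
        rw [Finset.sum_const, Finset.card_univ, nsmul_eq_mul]
  tfae_have 2 → 1 := by
    intro h2 α hα j₀
    obtain ⟨δ, hδ0, hδ⟩ := aux_exists_delta α hα
    set m : ℕ → ℝ := fun j => ∑ g, if α g ≠ 1 then c j g else 0 with hm
    have hm0 : ∀ j, 0 ≤ m j := fun j =>
      Finset.sum_nonneg fun g _ => by split_ifs; exacts [hpos j g, le_rfl]
    have hmsum : ¬ Summable m := h2 α hα
    set κ : ℝ := δ / (2 * (Fintype.card H : ℝ)) with hκ
    have hκ0 : 0 < κ := by positivity
    have hbound : ∀ j, ‖∑ g, (c j g : ℂ) * α g⁻¹‖ ≤ Real.exp (-(κ * m j)) := by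
      intro j
      have hkey := aux_normSq_bound (c j) (hpos j) (hsum j) α hδ
      have hc1j : 1 / (Fintype.card H:ℝ) ≤ c j 1 := by
        rw [div_le_iff₀ hcard]
        linarith [hc1 j, mul_comm (Fintype.card H : ℝ) (c j 1)]
      have hX : δ / (Fintype.card H:ℝ) * m j ≤ c j 1 * (δ * m j) := by
        have hmul := mul_le_mul_of_nonneg_right hc1j (mul_nonneg hδ0.le (hm0 j))
        calc δ / (Fintype.card H:ℝ) * m j = 1 / (Fintype.card H:ℝ) * (δ * m j) := by ring
          _ ≤ c j 1 * (δ * m j) := hmul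
      have hnormSq_le : Complex.normSq (∑ g, (c j g : ℂ) * α g⁻¹)
          ≤ Real.exp (-(δ / (Fintype.card H:ℝ) * m j)) := by
        have hle1 : Complex.normSq (∑ g, (c j g : ℂ) * α g⁻¹)
            ≤ 1 - δ / (Fintype.card H:ℝ) * m j := by linarith
        have := Real.add_one_le_exp (-(δ / (Fintype.card H:ℝ) * m j))
        linarith
      have hexp2 : Real.exp (-(κ * m j)) ^ 2 = Real.exp (-(δ / (Fintype.card H:ℝ) * m j)) := by
        rw [sq, ← Real.exp_add]
        congr 1
        rw [hκ]
        field_simp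
        ring
      have hsq : ‖∑ g, (c j g : ℂ) * α g⁻¹‖ ^ 2 ≤ Real.exp (-(κ * m j)) ^ 2 := by
        rw [Complex.sq_norm, hexp2]
        exact hnormSq_le
      have := Real.sqrt_le_sqrt hsq
      rwa [Real.sqrt_sq (norm_nonneg _), Real.sqrt_sq (Real.exp_nonneg _)] at this
    have hprod : ∀ d, ‖∏ j ∈ Finset.Icc j₀ (j₀+d), ∑ g, (c j g : ℂ) * α g⁻¹‖ ≤
        Real.exp (-(κ * ∑ j ∈ Finset.Icc j₀ (j₀+d), m j)) := by
      intro d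
      rw [norm_prod]
      calc ∏ j ∈ Finset.Icc j₀ (j₀+d), ‖∑ g, (c j g : ℂ) * α g⁻¹‖
          ≤ ∏ j ∈ Finset.Icc j₀ (j₀+d), Real.exp (-(κ * m j)) :=
            Finset.prod_le_prod (fun j _ => norm_nonneg _) (fun j _ => hbound j)
        _ = Real.exp (∑ j ∈ Finset.Icc j₀ (j₀+d), -(κ * m j)) := (Real.exp_sum _ _).symm
        _ = Real.exp (-(κ * ∑ j ∈ Finset.Icc j₀ (j₀+d), m j)) := by
            congr 1
            rw [Finset.mul_sum, ← Finset.sum_neg_distrib]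
    have hA : Tendsto (fun d => ∑ j ∈ Finset.Icc j₀ (j₀+d), m j) atTop atTop := by
      have hP : Tendsto (fun n => ∑ j ∈ Finset.range n, m j) atTop atTop :=
        (not_summable_iff_tendsto_nat_atTop_of_nonneg hm0).1 hmsum
      have h1 : Tendsto (fun d : ℕ => j₀ + d + 1) atTop atTop :=
        tendsto_atTop_atTop.2 fun b => ⟨b, fun a ha => by omega⟩
      have hcomp : Tendsto (fun d => ∑ j ∈ Finset.range (j₀+d+1), m j) atTop atTop :=
        hP.comp h1
      have heq : ∀ d, ∑ j ∈ Finset.Icc j₀ (j₀+d), m j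
          = ∑ j ∈ Finset.range (j₀+d+1), m j + -(∑ j ∈ Finset.range j₀, m j) := by
        intro d
        rw [← Finset.Ico_add_one_right_eq_Icc, Finset.sum_Ico_eq_sub _ (by omega)]
        ring
      exact Tendsto.congr (fun d => (heq d).symm)
        (tendsto_atTop_add_const_right atTop _ hcomp)
    have hexp : Tendsto (fun d => Real.exp (-(κ * ∑ j ∈ Finset.Icc j₀ (j₀+d), m j)))
        atTop (nhds 0) := by
      refine Real.tendsto_exp_atBot.comp ?_
      have hmulT : Tendsto (fun d => κ * ∑ j ∈ Finset.Icc j₀ (j₀+d), m j) atTop atTop :=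
        hA.const_mul_atTop hκ0
      exact tendsto_neg_atBot_iff.mpr hmulT
    exact squeeze_zero_norm hprod hexp
  tfae_have 1 → 2 := by
    intro h1 α hα hsumm
    have honeC : ∀ j, (1:ℂ) = ∑ g, (c j g : ℂ) := by
      intro j
      rw [← Complex.ofReal_sum, hsum j, Complex.ofReal_one]
    have htle : ∀ j, ‖1 - ∑ g, (c j g : ℂ) * α g⁻¹‖
        ≤ 2 * ∑ g, if α g ≠ 1 then c j g else 0 := by
      intro j
      have h1S : 1 - ∑ g, (c j g : ℂ) * α g⁻¹ = ∑ g, (c j g : ℂ) * (1 - α g⁻¹) := by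
        conv_lhs => rw [honeC j]
        rw [← Finset.sum_sub_distrib]
        exact Finset.sum_congr rfl fun g _ => by ring
      rw [h1S]
      calc ‖∑ g, (c j g:ℂ) * (1 - α g⁻¹)‖ ≤ ∑ g, ‖(c j g:ℂ) * (1 - α g⁻¹)‖ :=
          norm_sum_le _ _
        _ ≤ ∑ g, 2 * (if α g ≠ 1 then c j g else 0) := by
          refine Finset.sum_le_sum fun g _ => ?_
          rw [norm_mul, Complex.norm_real]
          by_cases hg : α g = 1
          · have hinv : α g⁻¹ = 1 := by rw [map_inv, hg, inv_one]
            simp [hg, hinv]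
          · have hn : ‖1 - α g⁻¹‖ ≤ 2 := by
              calc ‖1 - α g⁻¹‖ ≤ ‖(1:ℂ)‖ + ‖α g⁻¹‖ := norm_sub_le _ _
                _ = 2 := by rw [norm_one, aux_char_norm]; norm_num
            simp only [hg, ne_eq, not_false_eq_true, if_true]
            rw [Real.norm_eq_abs, abs_of_nonneg (hpos j g)]
            nlinarith [hpos j g, hn, norm_nonneg ((1:ℂ) - α g⁻¹)]
        _ = 2 * ∑ g, (if α g ≠ 1 then c j g else 0) := by rw [Finset.mul_sum]
    have htsummable : Summable (fun j => ‖1 - ∑ g, (c j g : ℂ) * α g⁻¹‖) :=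
      Summable.of_nonneg_of_le (fun j => norm_nonneg _) htle (hsumm.mul_left 2)
    have htail := tendsto_sum_nat_add (fun j => ‖1 - ∑ g, (c j g : ℂ) * α g⁻¹‖)
    obtain ⟨j₀, hj₀⟩ := (htail.eventually_lt_const (by norm_num : (0:ℝ) < 1/2)).exists
    have hlow : ∀ d, (1:ℝ)/2 ≤ ‖∏ j ∈ Finset.Icc j₀ (j₀+d), ∑ g, (c j g : ℂ) * α g⁻¹‖ := by
      intro d
      have hb := aux_prod_norm_lower (Finset.Icc j₀ (j₀+d)) (fun j => ∑ g, (c j g : ℂ) * α g⁻¹)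
      have he : ∑ j ∈ Finset.Icc j₀ (j₀+d), ‖1 - ∑ g, (c j g : ℂ) * α g⁻¹‖
          = ∑ i ∈ Finset.range (d+1), ‖1 - ∑ g, (c (i + j₀) g : ℂ) * α g⁻¹‖ := by
        rw [← Finset.Ico_add_one_right_eq_Icc, Finset.sum_Ico_eq_sum_range]
        have hn : j₀ + d + 1 - j₀ = d + 1 := by omega
        rw [hn]
        exact Finset.sum_congr rfl fun i _ => by rw [Nat.add_comm j₀ i]
      have hle2 : ∑ j ∈ Finset.Icc j₀ (j₀+d), ‖1 - ∑ g, (c j g : ℂ) * α g⁻¹‖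
          ≤ ∑' k, ‖1 - ∑ g, (c (k + j₀) g : ℂ) * α g⁻¹‖ := by
        rw [he]
        exact Summable.sum_le_tsum _ (fun i _ => norm_nonneg _)
          ((summable_nat_add_iff j₀).2 htsummable)
      have hlt : ∑ j ∈ Finset.Icc j₀ (j₀+d), ‖1 - ∑ g, (c j g : ℂ) * α g⁻¹‖ < 1/2 :=
        lt_of_le_of_lt hle2 hj₀
      linarith [hb]
    have hT := (h1 α hα j₀).norm
    rw [norm_zero] at hT
    obtain ⟨d, hd⟩ := (hT.eventually_lt_const (by norm_num : (0:ℝ) < 1/2)).exists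
    exact absurd hd (not_lt.2 (hlow d))
  tfae_have 2 → 3 := by
    intro h2 K hK hsumm
    obtain ⟨a, ha⟩ : ∃ a : H, a ∉ K := by
      by_contra h
      push_neg at h
      exact hK.1 ((Subgroup.eq_top_iff' K).mpr h)
    have hmk : (QuotientGroup.mk a : H ⧸ K) ≠ 1 := by
      simpa [ne_eq, QuotientGroup.eq_one_iff] using ha
    haveI : NeZero (Monoid.exponent (H ⧸ K)) := ⟨Monoid.exponent_ne_zero_of_finite⟩
    obtain ⟨φ, hφ⟩ := CommGroup.exists_apply_ne_one_of_hasEnoughRootsOfUnity (H ⧸ K) ℂ hmk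
    set α : H →* ℂ := (Units.coeHom ℂ).comp (φ.comp (QuotientGroup.mk' K)) with hαdef
    have hαa : α a ≠ 1 := by
      intro h
      exact hφ (Units.ext (by simpa [hαdef] using h))
    have hα1 : α ≠ 1 := fun h => hαa (by rw [h]; rfl)
    have hvanish : ∀ g : H, g ∈ K → α g = 1 := by
      intro g hg
      have h1 : (QuotientGroup.mk g : H ⧸ K) = 1 := (QuotientGroup.eq_one_iff g).mpr hg
      simp [hαdef, h1]
    refine h2 α hα1 (Summable.of_nonneg_of_le ?_ ?_ hsumm)
    · intro j
      exact Finset.sum_nonneg fun g _ => by split_ifs; exacts [hpos j g, le_rfl]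
    · intro j
      refine Finset.sum_le_sum fun g _ => ?_
      by_cases hg : g ∈ K
      · simp [hg, hvanish g hg]
      · simp only [hg, if_false]
        split_ifs
        exacts [le_rfl, hpos j g]
  tfae_have 3 → 2 := by
    intro h3 α hα hsumm
    obtain ⟨x₀, hx₀⟩ : ∃ x : H, α x ≠ 1 := by
      by_contra h
      push_neg at h
      exact hα (MonoidHom.ext fun x => by simpa using h x)
    have hLne : aux_ker α ≠ ⊤ := by
      intro h
      exact hx₀ (aux_mem_ker.mp (h.symm ▸ Subgroup.mem_top x₀))
    haveI : Finite (Subgroup H) := by infer_instance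
    obtain ⟨K, hK, hLK⟩ := (eq_top_or_exists_le_coatom (aux_ker α)).resolve_left hLne
    refine h3 K hK (Summable.of_nonneg_of_le ?_ ?_ hsumm)
    · intro j
      exact Finset.sum_nonneg fun g _ => by split_ifs; exacts [le_rfl, hpos j g]
    · intro j
      refine Finset.sum_le_sum fun g _ => ?_
      by_cases hg : g ∈ K
      · simp only [hg, if_true]
        split_ifs
        exacts [hpos j g, le_rfl]
      · have hαg : α g ≠ 1 := fun h => hg (hLK (aux_mem_ker.mpr h))
        simp [hg, hαg]
  tfae_have 2 → 4 := by
    intro h2 α β hαβ hsumm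
    set γ : H →* ℂ := α * ((starRingEnd ℂ).toMonoidHom.comp β) with hγdef
    have hγval : ∀ x, γ x = α x * (starRingEnd ℂ) (β x) := fun x => rfl
    have hiff : ∀ x : H, (γ x = 1 ↔ α x = β x) := by
      intro x
      have hb0 : β x ≠ 0 := by
        intro h
        have hn := aux_char_norm β x
        rw [h, norm_zero] at hn
        norm_num at hn
      have hc : (starRingEnd ℂ) (β x) = (β x)⁻¹ := (Complex.inv_eq_conj (aux_char_norm β x)).symm
      rw [hγval, hc, mul_inv_eq_one₀ hb0]
    have hγ1 : γ ≠ 1 := by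
      intro h
      apply hαβ
      ext x
      exact (hiff x).mp (by rw [h, MonoidHom.one_apply])
    have hmeq : (fun j => ∑ g, if γ g ≠ 1 then c j g else 0)
        = fun j => ∑ g, if α g ≠ β g then c j g else 0 := by
      funext j
      exact Finset.sum_congr rfl fun g _ => if_congr (not_congr (hiff g)) rfl rfl
    refine h2 γ hγ1 ?_
    rw [hmeq]
    refine Summable.of_nonneg_of_le ?_ ?_ (hsumm.mul_left (Fintype.card H : ℝ))
    · intro j
      exact Finset.sum_nonneg fun g _ => by split_ifs; exacts [hpos j g, le_rfl]
    · intro j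
      have hM0 : 0 ≤ ∑ g, if α g ≠ β g then c j g else 0 :=
        Finset.sum_nonneg fun g _ => by split_ifs; exacts [hpos j g, le_rfl]
      have hinner : ∀ g, (if α g ≠ β g then c j g * c j 1 else 0) ≤
          ∑ h, (if α (g * h⁻¹) ≠ β (g * h⁻¹) then c j g * c j h else 0) := by
        intro g
        have hs := Finset.single_le_sum
          (f := fun h => if α (g * h⁻¹) ≠ β (g * h⁻¹) then c j g * c j h else 0)
          (fun h _ => by split_ifs; exacts [mul_nonneg (hpos j g) (hpos j _), le_rfl])
          (Finset.mem_univ (1:H))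
        simpa using hs
      have hstep : c j 1 * (∑ g, if α g ≠ β g then c j g else 0)
          ≤ ∑ g, ∑ h, if α (g * h⁻¹) ≠ β (g * h⁻¹) then c j g * c j h else 0 := by
        rw [Finset.mul_sum]
        refine Finset.sum_le_sum fun g _ => le_trans ?_ (hinner g)
        split_ifs
        · exact le_of_eq (by ring)
        · simp
      calc (∑ g, if α g ≠ β g then c j g else 0)
          ≤ ((Fintype.card H : ℝ) * c j 1) * (∑ g, if α g ≠ β g then c j g else 0) :=
            le_mul_of_one_le_left hM0 (hc1 j)
        _ = (Fintype.card H : ℝ) * (c j 1 * ∑ g, if α g ≠ β g then c j g else 0) := by ring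
        _ ≤ (Fintype.card H : ℝ) *
            (∑ g, ∑ h, if α (g * h⁻¹) ≠ β (g * h⁻¹) then c j g * c j h else 0) :=
            mul_le_mul_of_nonneg_left hstep hcard.le
  tfae_have 4 → 2 := by
    intro h4 α hα hsumm
    refine h4 α 1 (by simpa using hα) ?_
    refine Summable.of_nonneg_of_le ?_ ?_ (hsumm.mul_left 2)
    · intro j
      exact Finset.sum_nonneg fun g _ => Finset.sum_nonneg fun h _ => by
        split_ifs
        exacts [mul_nonneg (hpos j g) (hpos j h), le_rfl]
    · intro j
      have hterm : ∀ g h : H, (if α (g*h⁻¹) ≠ (1 : H →* ℂ) (g*h⁻¹) then c j g * c j h else 0) ≤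
          (if α g ≠ 1 then c j g * c j h else 0) + (if α h ≠ 1 then c j g * c j h else 0) := by
        intro g h
        have hA0 : (0:ℝ) ≤ if α g ≠ 1 then c j g * c j h else 0 := by
          split_ifs; exacts [mul_nonneg (hpos j g) (hpos j h), le_rfl]
        have hB0 : (0:ℝ) ≤ if α h ≠ 1 then c j g * c j h else 0 := by
          split_ifs; exacts [mul_nonneg (hpos j g) (hpos j h), le_rfl]
        simp only [MonoidHom.one_apply]
        by_cases hgh : α (g * h⁻¹) = 1
        · simp only [hgh, ne_eq, not_true_eq_false, if_false]
          linarith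
        · have hor : α g ≠ 1 ∨ α h ≠ 1 := by
            by_contra hcon
            push_neg at hcon
            apply hgh
            rw [map_mul, map_inv, hcon.1, hcon.2, inv_one, mul_one]
          simp only [hgh, ne_eq, not_false_eq_true, if_true]
          rcases hor with h' | h'
          · rw [if_pos h']
            linarith
          · rw [if_pos h']
            linarith
      calc ∑ g, ∑ h, (if α (g*h⁻¹) ≠ (1 : H →* ℂ) (g*h⁻¹) then c j g * c j h else 0)
          ≤ ∑ g, ∑ h, ((if α g ≠ 1 then c j g * c j h else 0)
              + (if α h ≠ 1 then c j g * c j h else 0)) :=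
            Finset.sum_le_sum fun g _ => Finset.sum_le_sum fun h _ => hterm g h
        _ = 2 * ∑ g, if α g ≠ 1 then c j g else 0 := by
          have hA : ∑ g : H, ∑ h : H, (if α g ≠ 1 then c j g * c j h else 0)
              = ∑ g, if α g ≠ 1 then c j g else 0 := by
            refine Finset.sum_congr rfl fun g _ => ?_
            by_cases hg : α g ≠ 1
            · rw [if_pos hg]
              have : ∑ h : H, (if α g ≠ 1 then c j g * c j h else 0)
                  = ∑ h : H, c j g * c j h :=
                Finset.sum_congr rfl fun h _ => if_pos hg
              rw [this, ← Finset.mul_sum, hsum j, mul_one]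
            · rw [if_neg hg]
              have : ∑ h : H, (if α g ≠ 1 then c j g * c j h else 0)
                  = ∑ _h : H, (0:ℝ) :=
                Finset.sum_congr rfl fun h _ => if_neg hg
              rw [this, Finset.sum_const, smul_zero]
          have hB : ∑ g : H, ∑ h : H, (if α h ≠ 1 then c j g * c j h else 0)
              = ∑ g, if α g ≠ 1 then c j g else 0 := by
            rw [Finset.sum_comm]
            refine Finset.sum_congr rfl fun h _ => ?_
            by_cases hh : α h ≠ 1
            · rw [if_pos hh]
              have : ∑ g : H, (if α h ≠ 1 then c j g * c j h else 0)
                  = ∑ g : H, c j g * c j h :=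
                Finset.sum_congr rfl fun g _ => if_pos hh
              rw [this, ← Finset.sum_mul, hsum j, one_mul]
            · rw [if_neg hh]
              have : ∑ g : H, (if α h ≠ 1 then c j g * c j h else 0)
                  = ∑ _g : H, (0:ℝ) :=
                Finset.sum_congr rfl fun g _ => if_neg hh
              rw [this, Finset.sum_const, smul_zero]
          simp only [Finset.sum_add_distrib]
          rw [hA, hB]
          ring
  tfae_finish
end

section
/- Let H be a finite abelian group (written multiplicatively) with exponent N (the least N ≥ 1 with g^N = 1 for all g ∈ H), and let q : H → ℝ[x,x⁻¹] be a family of Laurent polynomials with nonnegative coefficients such that Σ_{g∈H} q_g(1) = 1. Let α ≠ β be two characters of H, and set S_{α,β} := {(g,h) ∈ H×H : α(g·h⁻¹) ≠ β(g·h⁻¹)}. Then ‖p_α · p_β‖₁ ≤ 1 − (1 − cos(π/N)) · Σ_{(g,h) ∈ S_{α,β}} q_g(1)·q_h(1). -/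
open Finsupp

/-- The coefficients of a real Laurent polynomial, i.e. of an element of the
monoid algebra `ℝ[ℤ]`, as a finitely supported function `ℤ →₀ ℝ`. -/
def lcoeff (p : AddMonoidAlgebra ℝ ℤ) : ℤ →₀ ℝ := p.coeff

/-- The coefficients of a complex Laurent polynomial. -/
def lcoeffC (p : AddMonoidAlgebra ℂ ℤ) : ℤ →₀ ℂ := p.coeff

/-- The `l¹` norm of a complex Laurent polynomial: the sum of the absolute values of
its coefficients. -/
noncomputable def l1C (p : AddMonoidAlgebra ℂ ℤ) : ℝ := (lcoeffC p).sum fun _ c => ‖c‖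

/-- Evaluation of a real Laurent polynomial at `x = 1`: the sum of its coefficients. -/
noncomputable def ev1 (p : AddMonoidAlgebra ℝ ℤ) : ℝ := (lcoeff p).sum fun _ c => c

/-- A real Laurent polynomial viewed as a complex Laurent polynomial. -/
noncomputable def toC (p : AddMonoidAlgebra ℝ ℤ) : AddMonoidAlgebra ℂ ℤ :=
  AddMonoidAlgebra.ofCoeff (Finsupp.mapRange (fun r : ℝ => (r : ℂ)) Complex.ofReal_zero (lcoeff p))


lemma l1C_eq_sum {s : Finset ℤ} {p : AddMonoidAlgebra ℂ ℤ} (h : (lcoeffC p).support ⊆ s) :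
    l1C p = ∑ m ∈ s, ‖(lcoeffC p) m‖ :=
  Finsupp.sum_of_support_subset _ h _ (fun _ _ => norm_zero)

lemma l1C_zero : l1C 0 = 0 := by simp [l1C, lcoeffC]

lemma l1C_add_le (p q : AddMonoidAlgebra ℂ ℤ) : l1C (p + q) ≤ l1C p + l1C q := by
  rw [l1C_eq_sum (p := p + q) (s := (lcoeffC p).support ∪ (lcoeffC q).support)
      (by exact Finsupp.support_add),
    l1C_eq_sum (s := (lcoeffC p).support ∪ (lcoeffC q).support) Finset.subset_union_left,
    l1C_eq_sum (s := (lcoeffC p).support ∪ (lcoeffC q).support) Finset.subset_union_right,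
    ← Finset.sum_add_distrib]
  exact Finset.sum_le_sum fun m _ => norm_add_le _ _

lemma l1C_sum_le {ι : Type*} (s : Finset ι) (f : ι → AddMonoidAlgebra ℂ ℤ) :
    l1C (∑ i ∈ s, f i) ≤ ∑ i ∈ s, l1C (f i) := by
  classical
  induction s using Finset.induction with
  | empty => simp [l1C_zero]
  | @insert a s ha ih =>
    rw [Finset.sum_insert ha, Finset.sum_insert ha]
    exact (l1C_add_le _ _).trans (by linarith)

lemma l1C_smul (z : ℂ) (p : AddMonoidAlgebra ℂ ℤ) : l1C (z • p) = ‖z‖ * l1C p := by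
  rw [l1C_eq_sum (p := z • p) (s := (lcoeffC p).support) (by exact Finsupp.support_smul),
    l1C_eq_sum (s := (lcoeffC p).support) subset_rfl, Finset.mul_sum]
  exact Finset.sum_congr rfl fun m _ => by
    show ‖(z • p).coeff m‖ = ‖z‖ * ‖p.coeff m‖
    rw [AddMonoidAlgebra.coeff_smul, Finsupp.smul_apply, norm_smul]

noncomputable def evHom : AddMonoidAlgebra ℝ ℤ →+* ℝ :=
  AddMonoidAlgebra.liftNCRingHom (RingHom.id ℝ) 1 (fun _ _ => Commute.all _ _)

lemma ev1_eq (p : AddMonoidAlgebra ℝ ℤ) : ev1 p = evHom p := by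
  show (lcoeff p).sum (fun _ c => c) = AddMonoidAlgebra.liftNC (RingHom.id ℝ).toAddMonoidHom 1 p
  rw [AddMonoidAlgebra.liftNC, AddMonoidHom.comp_apply]; erw [Finsupp.liftAddHom_apply]
  simp [lcoeff]

noncomputable def toCHom : AddMonoidAlgebra ℝ ℤ →+* AddMonoidAlgebra ℂ ℤ :=
  AddMonoidAlgebra.liftNCRingHom
    ((AddMonoidAlgebra.singleZeroRingHom).comp Complex.ofRealHom)
    (AddMonoidAlgebra.of ℂ ℤ) (fun _ _ => Commute.all _ _)

lemma toC_eq (p : AddMonoidAlgebra ℝ ℤ) : toC p = toCHom p := by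
  classical
  have h1 : toCHom p = p.coeff.sum fun a b => AddMonoidAlgebra.single a (b : ℂ) := by
    show AddMonoidAlgebra.liftNC _ _ p = _
    rw [AddMonoidAlgebra.liftNC, AddMonoidHom.comp_apply]; erw [Finsupp.liftAddHom_apply]
    refine Finsupp.sum_congr fun a _ => ?_
    show AddMonoidAlgebra.singleZeroRingHom (Complex.ofRealHom _) * AddMonoidAlgebra.of ℂ ℤ _ = _
    show AddMonoidAlgebra.single 0 ((p.coeff a : ℂ)) * AddMonoidAlgebra.single a 1 = _
    rw [AddMonoidAlgebra.single_mul_single, zero_add, mul_one]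
    rfl
  rw [h1]
  ext m
  rw [AddMonoidAlgebra.coeff_finsuppSum, Finsupp.sum_apply]
  simp only [toC, lcoeff, AddMonoidAlgebra.coeff_ofCoeff, Finsupp.mapRange_apply, Finsupp.sum,
    AddMonoidAlgebra.coeff_single, Finsupp.single_apply]
  rw [Finset.sum_ite_eq' p.coeff.support m fun a => ((p.coeff a : ℂ))]
  by_cases h : m ∈ p.coeff.support
  · simp [h]
  · simp [h, Finsupp.notMem_support_iff.mp h]

lemma ev1_mul (p q : AddMonoidAlgebra ℝ ℤ) : ev1 (p * q) = ev1 p * ev1 q := by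
  rw [ev1_eq, ev1_eq, ev1_eq, map_mul]

lemma toC_mul (p q : AddMonoidAlgebra ℝ ℤ) : toC (p * q) = toC p * toC q := by
  rw [toC_eq, toC_eq, toC_eq, map_mul]

lemma lcoeff_mul_nonneg {p q : AddMonoidAlgebra ℝ ℤ} (hp : ∀ m, 0 ≤ lcoeff p m)
    (hq : ∀ m, 0 ≤ lcoeff q m) (m : ℤ) : 0 ≤ lcoeff (p * q) m := by
  classical
  show 0 ≤ (p * q).coeff m
  rw [AddMonoidAlgebra.coeff_mul]
  refine Finset.sum_nonneg fun a _ => Finset.sum_nonneg fun b _ => ?_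
  dsimp only
  split
  · exact mul_nonneg (hp a) (hq b)
  · exact le_rfl


lemma re_le_cos {N : ℕ} (hN : 2 ≤ N) {z : ℂ} (hz : z ^ N = 1) (h1 : z ≠ 1) :
    z.re ≤ Real.cos (2 * Real.pi / N) := by
  have hz0 : z ≠ 0 := by
    intro h; rw [h] at hz; simp [zero_pow (by omega : N ≠ 0)] at hz
  have habs : ‖z‖ = 1 := by
    have : ‖z‖ ^ N = 1 := by rw [← norm_pow, hz, norm_one]
    have h0 : 0 ≤ ‖z‖ := norm_nonneg z
    rcases (pow_eq_one_iff_cases).mp this with h | h | h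
    · omega
    · exact h
    · exfalso; nlinarith [h.1]
  set θ := Complex.arg z with hθ
  have hzexp : z = Complex.exp (θ * Complex.I) := by
    have := Complex.norm_mul_exp_arg_mul_I z
    rw [habs, Complex.ofReal_one, one_mul] at this
    exact this.symm
  -- N θ = 2 π n
  have hexp1 : Complex.exp ((N : ℂ) * (θ * Complex.I)) = 1 := by
    rw [Complex.exp_nat_mul, ← hzexp, hz]
  obtain ⟨n, hn⟩ := Complex.exp_eq_one_iff.mp hexp1
  -- θ = 2 π n / N  as reals
  have hNne : (N : ℝ) ≠ 0 := by positivity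
  have hθeq : (N : ℝ) * θ = n * (2 * Real.pi) := by
    have := hn
    rw [mul_comm ((n : ℂ)) _] at this
    have h2 : ((N : ℝ) * θ : ℝ) * Complex.I = (((n : ℝ) * (2 * Real.pi)) : ℝ) * Complex.I := by
      push_cast
      rw [← mul_assoc] at this
      push_cast at this
      rw [this]; ring
    have := mul_right_cancel₀ Complex.I_ne_zero h2
    exact_mod_cast Complex.ofReal_inj.mp this
  have hnne : n ≠ 0 := by
    intro h
    rw [h] at hθeq
    simp at hθeq
    rcases hθeq with h' | h'
    · omega
    · apply h1; rw [hzexp, h']; simp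
  have hpi := Real.pi_pos
  have habsθ : 2 * Real.pi / N ≤ |θ| := by
    have : |(N : ℝ) * θ| = |(n : ℝ)| * (2 * Real.pi) := by
      rw [hθeq, abs_mul, abs_of_pos (by positivity : (0:ℝ) < 2 * Real.pi)]
    have h1n : (1 : ℝ) ≤ |(n : ℝ)| := by
      have : (1 : ℤ) ≤ |n| := Int.one_le_abs (by simpa using hnne)
      exact_mod_cast this
    rw [abs_mul, abs_of_pos (by positivity : (0:ℝ) < (N:ℝ))] at this
    rw [div_le_iff₀ (by positivity : (0:ℝ) < (N:ℝ))]
    calc 2 * Real.pi ≤ |(n:ℝ)| * (2 * Real.pi) := by nlinarith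
      _ = (N:ℝ) * |θ| := this.symm
      _ = |θ| * N := by ring
  have hθpi : |θ| ≤ Real.pi := Complex.abs_arg_le_pi z
  have hre : z.re = Real.cos θ := by
    have := Complex.cos_arg hz0
    rw [habs, div_one] at this
    exact this.symm
  rw [hre, ← Real.cos_abs]
  exact Real.cos_le_cos_of_nonneg_of_le_pi (by positivity) hθpi habsθ

lemma norm_add_le_two_cos {N : ℕ} (hN : 2 ≤ N) {u v : ℂ} (hu : u ^ N = 1) (hv : v ^ N = 1)
    (huv : u ≠ v) : ‖u + v‖ ≤ 2 * Real.cos (Real.pi / N) := by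
  have hNpos : (0:ℝ) < N := by positivity
  have hnorm : ∀ w : ℂ, w ^ N = 1 → ‖w‖ = 1 := by
    intro w hw
    have : ‖w‖ ^ N = 1 := by rw [← norm_pow, hw, norm_one]
    rcases pow_eq_one_iff_cases.mp this with h | h | h
    · omega
    · exact h
    · exfalso; nlinarith [norm_nonneg w, h.1]
  have hun : ‖u‖ = 1 := hnorm u hu
  have hvn : ‖v‖ = 1 := hnorm v hv
  have hv0 : v ≠ 0 := by intro h; rw [h, norm_zero] at hvn; norm_num at hvn
  set z := u / v with hzdef
  have hzN : z ^ N = 1 := by rw [hzdef, div_pow, hu, hv, div_one]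
  have hz1 : z ≠ 1 := by
    intro h; apply huv; rw [hzdef, div_eq_one_iff_eq hv0] at h; exact h
  have hre := re_le_cos hN hzN hz1
  have hznorm : ‖z‖ = 1 := by rw [hzdef, norm_div, hun, hvn, div_one]
  have hfact : u + v = v * (z + 1) := by rw [hzdef]; field_simp
  rw [hfact, norm_mul, hvn, one_mul]
  have h2N : (2:ℝ) ≤ N := by exact_mod_cast hN
  have hnsq : z.re * z.re + z.im * z.im = 1 := by
    have : Complex.normSq z = 1 := by
      rw [← Complex.sq_norm, hznorm]; norm_num
    rw [← Complex.normSq_apply]; exact this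
  have hsq : ‖z + 1‖ ^ 2 = 2 + 2 * z.re := by
    rw [Complex.sq_norm, Complex.normSq_apply, Complex.add_re,
      Complex.add_im, Complex.one_re, Complex.one_im]
    linear_combination hnsq
  have hcosnn : 0 ≤ Real.cos (Real.pi / N) := by
    apply Real.cos_nonneg_of_mem_Icc
    have hpi := Real.pi_pos
    constructor
    · have : (0:ℝ) ≤ Real.pi / N := by positivity
      linarith
    · rw [div_le_div_iff₀ hNpos (by norm_num : (0:ℝ) < 2)]
      nlinarith
  have hco : Real.cos (2 * Real.pi / ↑N) = 2 * Real.cos (Real.pi / N) ^ 2 - 1 := by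
    rw [mul_div_assoc, Real.cos_two_mul]
  have hfin : ‖z + 1‖ ^ 2 ≤ (2 * Real.cos (Real.pi / N)) ^ 2 := by
    rw [hsq]; nlinarith [hre, hco]
  nlinarith [norm_nonneg (z + 1), hfin, hcosnn]

lemma l1C_toC {p : AddMonoidAlgebra ℝ ℤ} (hp : ∀ m, 0 ≤ lcoeff p m) : l1C (toC p) = ev1 p := by
  rw [l1C_eq_sum (p := toC p) (s := (lcoeff p).support)
    (by exact Finsupp.support_mapRange (hf := Complex.ofReal_zero))]
  rw [ev1, Finsupp.sum]
  refine Finset.sum_congr rfl fun m _ => ?_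
  show ‖(toC p).coeff m‖ = lcoeff p m
  rw [toC, AddMonoidAlgebra.coeff_ofCoeff, Finsupp.mapRange_apply, Complex.norm_real, Real.norm_of_nonneg (hp m)]

lemma ev1_nonneg {p : AddMonoidAlgebra ℝ ℤ} (hp : ∀ m, 0 ≤ lcoeff p m) : 0 ≤ ev1 p :=
  Finset.sum_nonneg fun m _ => hp m


open scoped Classical in
/-- The main estimate in the proof of Lemma 1.2: for a family `q : H → ℝ[x,x⁻¹]` of
nonnegative Laurent polynomials with total mass `1`, and distinct characters `α ≠ β`
of the finite abelian group `H` of exponent `N`, the product of the eigenvalue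
polynomials `p_α = ∑ g, α(g⁻¹)·q_g` and `p_β` satisfies
`‖p_α p_β‖₁ ≤ 1 - (1 - cos (π/N)) · ∑_{(g,h) ∈ S_{α,β}} q_g(1) q_h(1)`. -/
theorem eigenvalue_product_norm_bound {H : Type} [CommGroup H] [Fintype H]
    (q : H → AddMonoidAlgebra ℝ ℤ)
    (hpos : ∀ g m, 0 ≤ lcoeff (q g) m)
    (hsum : ∑ g, ev1 (q g) = 1)
    (α β : H →* ℂ) (hαβ : α ≠ β) :
    l1C ((∑ g, α g⁻¹ • toC (q g)) * (∑ g, β g⁻¹ • toC (q g))) ≤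
      1 - (1 - Real.cos (Real.pi / (Monoid.exponent H))) *
        ∑ g, ∑ h, if α (g * h⁻¹) ≠ β (g * h⁻¹) then ev1 (q g) * ev1 (q h) else 0 := by
  classical
  set N := Monoid.exponent H with hNdef
  have hNne : N ≠ 0 := Monoid.exponent_ne_zero_of_finite
  have hN2 : 2 ≤ N := by
    rcases Nat.lt_or_ge N 2 with h | h
    · exfalso
      have hN1 : N = 1 := by omega
      have : Subsingleton H := Monoid.exp_eq_one_iff.mp hN1
      exact hαβ (MonoidHom.ext fun g => by
        rw [Subsingleton.elim g 1, map_one, map_one])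
    · exact h
  have hpow : ∀ (χ : H →* ℂ) (g : H), χ g ^ N = 1 := fun χ g => by
    rw [← map_pow, Monoid.pow_exponent_eq_one, map_one]
  have hval_norm : ∀ (χ : H →* ℂ) (g : H), ‖χ g‖ = 1 := by
    intro χ g
    have h1 : ‖χ g‖ ^ N = 1 := by rw [← norm_pow, hpow, norm_one]
    rcases pow_eq_one_iff_cases.mp h1 with h | h | h
    · omega
    · exact h
    · exfalso; nlinarith [norm_nonneg (χ g), h.1]
  have hval_ne : ∀ (χ : H →* ℂ) (g : H), χ g ≠ 0 := by
    intro χ g h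
    have := hval_norm χ g
    rw [h, norm_zero] at this; norm_num at this
  have hinv : ∀ (χ : H →* ℂ) (g : H), χ g⁻¹ = (χ g)⁻¹ := by
    intro χ g
    refine eq_inv_of_mul_eq_one_left ?_
    rw [← map_mul, inv_mul_cancel, map_one]
  set E : H → ℝ := fun g => ev1 (q g) with hE
  have hEnn : ∀ g, 0 ≤ E g := fun g => ev1_nonneg (hpos g)
  set d : H → H → ℂ := fun g h => (α g⁻¹ * β h⁻¹ + α h⁻¹ * β g⁻¹) / 2 with hd
  have hswap : ∀ (c : H → H → ℂ),
      ∑ g : H, ∑ h : H, c g h • (toC (q g) * toC (q h))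
        = ∑ g : H, ∑ h : H, c h g • (toC (q g) * toC (q h)) := by
    intro c
    rw [Finset.sum_comm]
    exact Finset.sum_congr rfl fun g _ => Finset.sum_congr rfl fun h _ => by
      rw [mul_comm (toC (q h))]
  have hPd : (∑ g, α g⁻¹ • toC (q g)) * (∑ g, β g⁻¹ • toC (q g))
      = ∑ g : H, ∑ h : H, d g h • (toC (q g) * toC (q h)) := by
    rw [Finset.sum_mul_sum]
    have h2 : ∑ g : H, ∑ h : H, d g h • (toC (q g) * toC (q h))
        = ∑ g : H, ∑ h : H, ((α g⁻¹ * β h⁻¹) / 2) • (toC (q g) * toC (q h))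
          + ∑ g : H, ∑ h : H, ((α h⁻¹ * β g⁻¹) / 2) • (toC (q g) * toC (q h)) := by
      rw [← Finset.sum_add_distrib]
      refine Finset.sum_congr rfl fun g _ => ?_
      rw [← Finset.sum_add_distrib]
      refine Finset.sum_congr rfl fun h _ => ?_
      rw [← add_smul]
      congr 1
      rw [hd]; ring
    rw [h2, hswap (fun g h => (α h⁻¹ * β g⁻¹) / 2), ← Finset.sum_add_distrib]
    refine Finset.sum_congr rfl fun g _ => ?_
    rw [← Finset.sum_add_distrib]
    refine Finset.sum_congr rfl fun h _ => ?_
    rw [smul_mul_smul_comm, ← add_smul]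
    congr 1
    ring
  rw [hPd]
  have hTnorm : ∀ g h : H, l1C (toC (q g) * toC (q h)) = E g * E h := by
    intro g h
    rw [← toC_mul, l1C_toC (lcoeff_mul_nonneg (hpos g) (hpos h)), ev1_mul]
  have hbound : l1C (∑ g : H, ∑ h : H, d g h • (toC (q g) * toC (q h)))
      ≤ ∑ g : H, ∑ h : H, ‖d g h‖ * (E g * E h) := by
    refine (l1C_sum_le _ _).trans (Finset.sum_le_sum fun g _ => ?_)
    refine (l1C_sum_le _ _).trans (Finset.sum_le_sum fun h _ => ?_)
    rw [l1C_smul, hTnorm]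
  have hdb : ∀ g h : H, ‖d g h‖ ≤
      if α (g * h⁻¹) ≠ β (g * h⁻¹) then Real.cos (Real.pi / N) else 1 := by
    intro g h
    have hu : (α g⁻¹ * β h⁻¹) ^ N = 1 := by rw [mul_pow, hpow, hpow, one_mul]
    have hv : (α h⁻¹ * β g⁻¹) ^ N = 1 := by rw [mul_pow, hpow, hpow, one_mul]
    have hun : ‖α g⁻¹ * β h⁻¹‖ = 1 := by rw [norm_mul, hval_norm, hval_norm, one_mul]
    have hvn : ‖α h⁻¹ * β g⁻¹‖ = 1 := by rw [norm_mul, hval_norm, hval_norm, one_mul]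
    by_cases hc : α (g * h⁻¹) ≠ β (g * h⁻¹)
    · rw [if_pos hc]
      have hne : α g⁻¹ * β h⁻¹ ≠ α h⁻¹ * β g⁻¹ := by
        intro he
        apply hc
        rw [hinv α g, hinv β h, hinv α h, hinv β g, ← mul_inv, ← mul_inv] at he
        have h1 : α g * β h = α h * β g := inv_injective he
        rw [map_mul, map_mul, hinv α h, hinv β h]
        have hah := hval_ne α h
        have hbh := hval_ne β h
        field_simp
        linear_combination h1
      have hle := norm_add_le_two_cos hN2 hu hv hne
      rw [hd]
      simp only
      rw [norm_div, Complex.norm_ofNat]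
      linarith
    · rw [if_neg hc]
      rw [hd]
      simp only
      rw [norm_div, Complex.norm_ofNat]
      have := norm_add_le (α g⁻¹ * β h⁻¹) (α h⁻¹ * β g⁻¹)
      rw [hun, hvn] at this
      linarith
  refine hbound.trans ?_
  have step2 : ∑ g : H, ∑ h : H, ‖d g h‖ * (E g * E h)
      ≤ ∑ g : H, ∑ h : H,
        (if α (g * h⁻¹) ≠ β (g * h⁻¹) then Real.cos (Real.pi / N) else 1) * (E g * E h) := by
    refine Finset.sum_le_sum fun g _ => Finset.sum_le_sum fun h _ => ?_
    exact mul_le_mul_of_nonneg_right (hdb g h) (mul_nonneg (hEnn g) (hEnn h))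
  refine step2.trans ?_
  have step3 : ∑ g : H, ∑ h : H,
      (if α (g * h⁻¹) ≠ β (g * h⁻¹) then Real.cos (Real.pi / N) else 1) * (E g * E h)
      = ∑ g : H, ∑ h : H, (E g * E h
        - (1 - Real.cos (Real.pi / N)) * (if α (g * h⁻¹) ≠ β (g * h⁻¹) then E g * E h else 0)) := by
    refine Finset.sum_congr rfl fun g _ => Finset.sum_congr rfl fun h _ => ?_
    by_cases hc : α (g * h⁻¹) ≠ β (g * h⁻¹)
    · rw [if_pos hc, if_pos hc]; ring
    · rw [if_neg hc, if_neg hc]; ring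
  rw [step3]
  have hEE : ∑ g : H, ∑ h : H, E g * E h = 1 := by
    rw [← Finset.sum_mul_sum]
    rw [hE]
    rw [hsum, one_mul]
  calc ∑ g : H, ∑ h : H, (E g * E h
        - (1 - Real.cos (Real.pi / N)) * (if α (g * h⁻¹) ≠ β (g * h⁻¹) then E g * E h else 0))
      = (∑ g : H, ∑ h : H, E g * E h)
        - (1 - Real.cos (Real.pi / N)) *
          ∑ g : H, ∑ h : H, (if α (g * h⁻¹) ≠ β (g * h⁻¹) then E g * E h else 0) := by
        rw [Finset.mul_sum, ← Finset.sum_sub_distrib]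
        refine Finset.sum_congr rfl fun g _ => ?_
        rw [Finset.mul_sum, ← Finset.sum_sub_distrib]
    _ = 1 - (1 - Real.cos (Real.pi / N)) *
          ∑ g : H, ∑ h : H, (if α (g * h⁻¹) ≠ β (g * h⁻¹) then E g * E h else 0) := by
        rw [hEE]
    _ ≤ 1 - (1 - Real.cos (Real.pi / ↑N)) *
          ∑ g, ∑ h, if α (g * h⁻¹) ≠ β (g * h⁻¹) then ev1 (q g) * ev1 (q h) else 0 := le_rfl
end

section
/- Let g : ℕ → ℕ with g(j) ≥ 1 for all j, let S ⊆ ℕ, and let e : ℕ → ℕ → ℤ satisfy e(s,i) ∈ {−1, 0, 1} for all s, i, with e(s,i) = 0 unless 1 ≤ i < s. Assume: (i) for every s ∈ S, g(s) = Σ_{i=1}^{s−1} e(s,i)·g(s−i) (as integers) and Σ_{i=1}^{s−1} e(s,i) is even; (ii) setting b(s) := 1 + Σ_{i=1}^{s−1} |e(s,i)|, the series Σ_{s∈S} 2^{−b(s)} diverges; (iii) setting supp(s) := {s} ∪ {s−i : e(s,i) ≠ 0}, the sets supp(s), s ∈ S, are pairwise disjoint. Then for every k ∈ ℕ, 2^{−N}·‖∏_{j=k+1}^{k+N}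 (1 − x^{g(j)})‖₁ tends to 0 as N → ∞. -/
open Filter Polynomial

/-- The `l¹` norm of a real polynomial: the sum of the absolute values of its
coefficients. -/
noncomputable def pl1 (p : Polynomial ℝ) : ℝ := ∑ m ∈ p.support, |p.coeff m|

lemma pl1_nonneg (p : Polynomial ℝ) : 0 ≤ pl1 p :=
  Finset.sum_nonneg fun _ _ => abs_nonneg _

lemma pl1_eq_sum (p : Polynomial ℝ) (t : Finset ℕ) (h : p.support ⊆ t) :
    pl1 p = ∑ m ∈ t, |p.coeff m| := by
  refine Finset.sum_subset h fun m _ hm => ?_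
  simp [Polynomial.notMem_support_iff.mp hm]

lemma pl1_add_le (p q : Polynomial ℝ) : pl1 (p + q) ≤ pl1 p + pl1 q := by
  rw [pl1_eq_sum (p+q) (p.support ∪ q.support)
      ((Polynomial.support_add).trans (le_refl _)),
    pl1_eq_sum p (p.support ∪ q.support) (Finset.subset_union_left),
    pl1_eq_sum q (p.support ∪ q.support) (Finset.subset_union_right),
    ← Finset.sum_add_distrib]
  exact Finset.sum_le_sum fun m _ => by simpa using abs_add_le (p.coeff m) (q.coeff m)

lemma pl1_sum_le {ι : Type*} (s : Finset ι) (f : ι → Polynomial ℝ) :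
    pl1 (∑ i ∈ s, f i) ≤ ∑ i ∈ s, pl1 (f i) := by
  classical
  induction s using Finset.cons_induction with
  | empty => simp [pl1]
  | cons a s ha ih =>
    rw [Finset.sum_cons, Finset.sum_cons]
    exact (pl1_add_le _ _).trans (by linarith)

lemma pl1_smul_X_pow_le (c : ℝ) (n : ℕ) : pl1 (c • (X : Polynomial ℝ) ^ n) ≤ |c| := by
  rw [pl1_eq_sum _ {n}]
  · simp [Polynomial.coeff_smul, Polynomial.coeff_X_pow]
  · refine (Polynomial.support_smul _ _).trans ?_
    simp [Polynomial.support_X_pow]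

lemma pl1_mul_le (p q : Polynomial ℝ) : pl1 (p * q) ≤ pl1 p * pl1 q := by
  classical
  set M := p.natDegree + q.natDegree + 1 with hM
  have hsupp : (p * q).support ⊆ Finset.range M := by
    intro m hm
    simp only [Finset.mem_range]
    have := Polynomial.le_natDegree_of_mem_supp m hm
    have := Polynomial.natDegree_mul_le (p := p) (q := q)
    omega
  rw [pl1_eq_sum _ _ hsupp]
  have h1 : ∀ m, |(p*q).coeff m| ≤ ∑ x ∈ Finset.HasAntidiagonal.antidiagonal m, |p.coeff x.1| * |q.coeff x.2| := by
    intro m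
    rw [Polynomial.coeff_mul]
    exact (Finset.abs_sum_le_sum_abs _ _).trans (le_of_eq (by simp [abs_mul]))
  refine le_trans (Finset.sum_le_sum fun m _ => h1 m) ?_
  have hdisj : ((Finset.range M : Finset ℕ) : Set ℕ).PairwiseDisjoint Finset.HasAntidiagonal.antidiagonal := by
    intro a _ b _ hab
    simp only [Function.onFun, Finset.disjoint_left]
    intro x hx hx'
    simp only [Finset.HasAntidiagonal.mem_antidiagonal] at hx hx'
    omega
  rw [← Finset.sum_biUnion hdisj]
  have hsub : (Finset.range M).biUnion Finset.HasAntidiagonal.antidiagonal ⊆ Finset.range M ×ˢ Finset.range M := by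
    intro x hx
    simp only [Finset.mem_biUnion, Finset.HasAntidiagonal.mem_antidiagonal, Finset.mem_range,
      Finset.mem_product] at hx ⊢
    obtain ⟨m, hm, hx⟩ := hx
    omega
  refine le_trans (Finset.sum_le_sum_of_subset_of_nonneg hsub fun _ _ _ =>
    mul_nonneg (abs_nonneg _) (abs_nonneg _)) ?_
  rw [Finset.sum_product]
  simp only []
  rw [← Finset.sum_mul_sum]
  have e1 : pl1 p = ∑ a ∈ Finset.range M, |p.coeff a| :=
    pl1_eq_sum p _ (fun a ha => Finset.mem_range.mpr (by
      have := Polynomial.le_natDegree_of_mem_supp a ha; omega))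
  have e2 : pl1 q = ∑ a ∈ Finset.range M, |q.coeff a| :=
    pl1_eq_sum q _ (fun a ha => Finset.mem_range.mpr (by
      have := Polynomial.le_natDegree_of_mem_supp a ha; omega))
  rw [e1, e2]

lemma pl1_prod_le {ι : Type*} (s : Finset ι) (f : ι → Polynomial ℝ) :
    pl1 (∏ i ∈ s, f i) ≤ ∏ i ∈ s, pl1 (f i) := by
  classical
  induction s using Finset.cons_induction with
  | empty =>
    simp only [Finset.prod_empty]
    rw [pl1_eq_sum 1 {0} (fun m hm => by
      simp only [Polynomial.mem_support_iff, Polynomial.coeff_one] at hm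
      simp only [Finset.mem_singleton]
      by_contra h; simp [h] at hm)]
    simp
  | cons a s ha ih =>
    rw [Finset.prod_cons, Finset.prod_cons]
    refine (pl1_mul_le _ _).trans ?_
    exact mul_le_mul_of_nonneg_left ih (pl1_nonneg _) |>.trans
      (mul_le_mul_of_nonneg_right (le_refl _) (Finset.prod_nonneg fun _ _ => pl1_nonneg _))

lemma prod_one_sub_X_pow {ι : Type*} [DecidableEq ι] (s : Finset ι) (n : ι → ℕ) :
    ∏ i ∈ s, (1 - (X : Polynomial ℝ) ^ n i) =
      ∑ t ∈ s.powerset, ((-1 : ℝ) ^ t.card) • (X : Polynomial ℝ) ^ (∑ i ∈ t, n i) := by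
  have h : ∀ i ∈ s, (1 - (X : Polynomial ℝ) ^ n i) = (-X ^ n i) + 1 := fun i _ => by ring
  rw [Finset.prod_congr rfl h, Finset.prod_add]
  refine Finset.sum_congr rfl fun t ht => ?_
  rw [Finset.prod_const_one, mul_one]
  have : ∀ i ∈ t, (-(X : Polynomial ℝ) ^ n i) = (-1) * X ^ n i := fun i _ => by ring
  rw [Finset.prod_congr rfl this, Finset.prod_mul_distrib, Finset.prod_const,
    Finset.prod_pow_eq_pow_sum, Polynomial.smul_eq_C_mul]
  simp [Polynomial.C_neg]

lemma pl1_sum_signed_monomials_le {ι : Type*} (G : Finset ι) (c : ι → ℕ) (m : ι → ℕ) :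
    pl1 (∑ t ∈ G, ((-1 : ℝ) ^ c t) • (X : Polynomial ℝ) ^ m t) ≤ G.card := by
  refine (pl1_sum_le _ _).trans ?_
  refine le_trans (Finset.sum_le_sum fun t _ => (pl1_smul_X_pow_le _ _)) ?_
  simp

lemma pl1_prod_one_sub_le {ι : Type*} [DecidableEq ι] (s : Finset ι) (n : ι → ℕ) :
    pl1 (∏ i ∈ s, (1 - (X : Polynomial ℝ) ^ n i)) ≤ 2 ^ s.card := by
  rw [prod_one_sub_X_pow]
  refine (pl1_sum_signed_monomials_le _ _ _).trans ?_
  rw [Finset.card_powerset]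
  simp

lemma block_bound (g : ℕ → ℕ) (hg : ∀ j, 1 ≤ g j) (s : ℕ) (e : ℕ → ℤ)
    (he1 : ∀ i, e i = -1 ∨ e i = 0 ∨ e i = 1)
    (hrec : (g s : ℤ) = ∑ i ∈ Finset.Ico 1 s, e i * (g (s - i) : ℤ))
    (hpar : Even (∑ i ∈ Finset.Ico 1 s, e i)) :
    pl1 (∏ j ∈ insert s (((Finset.Ico 1 s).filter (fun i => e i ≠ 0)).image (fun i => s - i)),
        (1 - (X : Polynomial ℝ) ^ g j))
      ≤ 2 ^ (1 + ((Finset.Ico 1 s).filter (fun i => e i ≠ 0)).card) - 2 := by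
  classical
  set F := (Finset.Ico 1 s).filter (fun i => e i ≠ 0) with hF
  have hFmem : ∀ i ∈ F, 1 ≤ i ∧ i < s ∧ e i ≠ 0 := by
    intro i hi
    simp only [hF, Finset.mem_filter, Finset.mem_Ico] at hi
    tauto
  -- rewrite the recurrence as a sum over F
  have hrecF : (g s : ℤ) = ∑ i ∈ F, e i * (g (s - i) : ℤ) := by
    rw [hrec]
    refine (Finset.sum_filter_of_ne ?_).symm
    intro i _ h
    intro h0
    exact h (by rw [h0]; ring)
  -- F is nonempty
  have hFne : F.Nonempty := by
    rcases Finset.eq_empty_or_nonempty F with h | h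
    · rw [h, Finset.sum_empty] at hrecF
      have := hg s
      omega
    · exact h
  have h0F : (0 : ℕ) ∉ F := fun h => by have := (hFmem 0 h).1; omega
  set I := insert 0 F with hI
  have hIlt : ∀ i ∈ I, i < s := by
    intro i hi
    rcases Finset.mem_insert.mp hi with h | h
    · obtain ⟨j, hj⟩ := hFne
      have := (hFmem j hj).2.1
      omega
    · exact (hFmem i h).2.1
  -- rewrite the product over the image
  have himg : insert s (F.image (fun i => s - i)) = I.image (fun i => s - i) := by
    rw [hI, Finset.image_insert]
    norm_num
  have hinj : ∀ i ∈ I, ∀ i' ∈ I, s - i = s - i' → i = i' := by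
    intro i hi i' hi' h
    have := hIlt i hi; have := hIlt i' hi'
    omega
  rw [himg, Finset.prod_image hinj, prod_one_sub_X_pow]
  -- the two cancelling subsets
  set Fneg := F.filter (fun i => e i = -1) with hFneg
  set Fpos := F.filter (fun i => e i = 1) with hFpos
  set T₁ := insert 0 Fneg with hT₁
  set T₂ := Fpos with hT₂
  have h0Fneg : (0 : ℕ) ∉ Fneg := fun h => h0F (Finset.mem_filter.mp h).1
  have h0Fpos : (0 : ℕ) ∉ Fpos := fun h => h0F (Finset.mem_filter.mp h).1
  have hT₁mem : T₁ ∈ I.powerset := by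
    rw [Finset.mem_powerset, hT₁, hI]
    exact Finset.insert_subset_insert _ (Finset.filter_subset _ _)
  have hT₂mem : T₂ ∈ I.powerset := by
    rw [Finset.mem_powerset, hT₂, hI]
    exact (Finset.filter_subset _ _).trans (Finset.subset_insert _ _)
  have hT₁T₂ : T₁ ≠ T₂ := by
    intro h
    have h2 : (0 : ℕ) ∈ T₂ := by rw [← h]; exact Finset.mem_insert_self 0 Fneg
    exact h0Fpos h2
  -- split F sum into pos and neg parts
  have hsplit : (g s : ℤ) = (∑ i ∈ Fpos, (g (s - i) : ℤ)) - ∑ i ∈ Fneg, (g (s - i) : ℤ) := by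
    rw [hrecF, ← Finset.sum_filter_add_sum_filter_not F (fun i => e i = 1)]
    have e1 : ∑ i ∈ F.filter (fun i => e i = 1), e i * (g (s - i) : ℤ)
        = ∑ i ∈ Fpos, (g (s - i) : ℤ) := by
      refine Finset.sum_congr rfl fun i hi => ?_
      have := (Finset.mem_filter.mp hi).2
      rw [this, one_mul]
    have heq : F.filter (fun i => ¬ e i = 1) = Fneg := by
      refine Finset.filter_congr fun i hi => ?_
      have h1 := (hFmem i hi).2.2
      rcases he1 i with h | h | h
      · simp [h]
      · exact absurd h h1
      · simp [h]
    have e2 : ∑ i ∈ F.filter (fun i => ¬ e i = 1), e i * (g (s - i) : ℤ)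
        = ∑ i ∈ Fneg, (-(g (s - i) : ℤ)) := by
      rw [heq]
      refine Finset.sum_congr rfl fun i hi => ?_
      have := (Finset.mem_filter.mp hi).2
      rw [this]; ring
    rw [e1, e2, Finset.sum_neg_distrib]
    ring
  -- exponent equality
  have hexp : (∑ i ∈ T₁, g (s - i)) = ∑ i ∈ T₂, g (s - i) := by
    have : (↑(∑ i ∈ T₁, g (s - i)) : ℤ) = (↑(∑ i ∈ T₂, g (s - i)) : ℤ) := by
      push_cast
      rw [hT₁, Finset.sum_insert h0Fneg]
      simp only [Nat.sub_zero]
      rw [hT₂]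
      omega
    exact_mod_cast this
  -- parity
  have hcard : (∑ i ∈ Finset.Ico 1 s, e i) = (Fpos.card : ℤ) - Fneg.card := by
    have : (∑ i ∈ Finset.Ico 1 s, e i) = ∑ i ∈ F, e i := by
      refine (Finset.sum_filter_of_ne ?_).symm
      intro i _ h h0
      exact h h0
    rw [this, ← Finset.sum_filter_add_sum_filter_not F (fun i => e i = 1)]
    have hpos : ∑ i ∈ F.filter (fun i => e i = 1), e i = (Fpos.card : ℤ) := by
      rw [Finset.sum_congr rfl (fun i hi => (Finset.mem_filter.mp hi).2)]
      simp
      rfl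
    have hneq : F.filter (fun i => ¬ e i = 1) = Fneg := by
      refine Finset.filter_congr fun i hi => ?_
      have h1 := (hFmem i hi).2.2
      rcases he1 i with h | h | h
      · simp [h]
      · exact absurd h h1
      · simp [h]
    have hneg : ∑ i ∈ F.filter (fun i => ¬ e i = 1), e i = -(Fneg.card : ℤ) := by
      rw [hneq, Finset.sum_congr rfl (fun i hi => (Finset.mem_filter.mp hi).2)]
      simp [mul_comm]
      rfl
    rw [hpos, hneg]
    ring
  have hsign : ((-1 : ℝ) ^ T₁.card) = -((-1 : ℝ) ^ T₂.card) := by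
    have hc1 : T₁.card = Fneg.card + 1 := by rw [hT₁, Finset.card_insert_of_notMem h0Fneg]
    have heven : Even ((Fpos.card : ℤ) - Fneg.card) := hcard ▸ hpar
    have : Even Fpos.card ↔ Even Fneg.card := by
      rw [Int.even_sub] at heven
      constructor
      · intro h; exact (Int.even_coe_nat _).mp (heven.mp ((Int.even_coe_nat _).mpr h))
      · intro h; exact (Int.even_coe_nat _).mp (heven.mpr ((Int.even_coe_nat _).mpr h))
    rw [hc1, hT₂]
    rcases Nat.even_or_odd Fpos.card with h | h
    · have h' : Odd (Fneg.card + 1) := (this.mp h).add_one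
      rw [(h'.neg_one_pow : ((-1 : ℝ)) ^ (Fneg.card + 1) = -1),
        (h.neg_one_pow : ((-1 : ℝ)) ^ Fpos.card = 1)]
      try norm_num
    · have h'' : Odd Fneg.card := Nat.not_even_iff_odd.mp fun hc =>
        (Nat.not_even_iff_odd.mpr h) (this.mpr hc)
      have h' : Even (Fneg.card + 1) := h''.add_one
      rw [(h'.neg_one_pow : ((-1 : ℝ)) ^ (Fneg.card + 1) = 1),
        (h.neg_one_pow : ((-1 : ℝ)) ^ Fpos.card = -1)]
      try norm_num
  -- split off the two cancelling terms
  have hpairsub : ({T₁, T₂} : Finset (Finset ℕ)) ⊆ I.powerset := by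
    intro t ht
    rcases Finset.mem_insert.mp ht with h | h
    · exact h ▸ hT₁mem
    · rw [Finset.mem_singleton] at h; exact h ▸ hT₂mem
  rw [← Finset.sum_sdiff hpairsub]
  have hzero : ∑ t ∈ ({T₁, T₂} : Finset (Finset ℕ)),
      ((-1 : ℝ) ^ t.card) • (X : Polynomial ℝ) ^ (∑ i ∈ t, g (s - i)) = 0 := by
    rw [Finset.sum_pair hT₁T₂, hexp, hsign]
    rw [neg_smul, neg_add_cancel]
  rw [hzero, add_zero]
  refine (pl1_sum_signed_monomials_le _ _ _).trans ?_
  have hcardI : I.card = 1 + F.card := by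
    rw [hI, Finset.card_insert_of_notMem h0F]; omega
  have hc : (I.powerset \ {T₁, T₂}).card = 2 ^ (1 + F.card) - 2 := by
    rw [Finset.card_sdiff_of_subset hpairsub, Finset.card_powerset, hcardI,
      Finset.card_insert_of_notMem (by simpa using hT₁T₂), Finset.card_singleton]
  rw [hc]
  have h2 : 2 ≤ 2 ^ (1 + F.card) := by
    calc 2 = 2 ^ 1 := by norm_num
    _ ≤ 2 ^ (1 + F.card) := Nat.pow_le_pow_right (by norm_num) (by omega)
  push_cast [Nat.cast_sub h2]
  norm_num

/-- Lemma 2.6: the mass-cancellation (hollowness) lemma. If the exponent sequence `g`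
satisfies, on an infinite enough set `S` of indices, recurrence relations
`g s = ∑_{i=1}^{s-1} e s i · g (s-i)` with coefficients `e s i ∈ {−1,0,1}` of even sum,
with `∑_{s ∈ S} 2^{−b(s)} = ∞` for `b(s) = 1 + ∑_i |e s i|`, and with pairwise disjoint
supports `{s} ∪ {s−i : e s i ≠ 0}`, then
`2^{−N}·‖∏_{j=k+1}^{k+N} (1 − x^{g j})‖₁ → 0` as `N → ∞`. -/
theorem even_recurrence_mass_cancellation
    (g : ℕ → ℕ) (hg : ∀ j, 1 ≤ g j) (S : Set ℕ) (e : ℕ → ℕ → ℤ)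
    (he1 : ∀ s i, e s i = -1 ∨ e s i = 0 ∨ e s i = 1)
    (he0 : ∀ s i, e s i ≠ 0 → 1 ≤ i ∧ i < s)
    (hrec : ∀ s ∈ S, (g s : ℤ) = ∑ i ∈ Finset.Ico 1 s, e s i * (g (s - i) : ℤ))
    (hpar : ∀ s ∈ S, Even (∑ i ∈ Finset.Ico 1 s, e s i))
    (hdiv : ¬ Summable (S.indicator fun s =>
      ((2 : ℝ)⁻¹) ^ (1 + ∑ i ∈ Finset.Ico 1 s, (e s i).natAbs)))
    (hsupp : S.Pairwise (Function.onFun Disjoint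
      (fun s => ({s} : Set ℕ) ∪ {t | ∃ i, e s i ≠ 0 ∧ t = s - i}))) :
    ∀ k : ℕ,
      Tendsto (fun N => pl1 (∏ j ∈ Finset.Icc (k + 1) (k + N), (1 - X ^ g j)) / 2 ^ N)
        atTop (nhds 0) := by
  classical
  intro k
  -- notation
  set b : ℕ → ℕ := fun s => 1 + ∑ i ∈ Finset.Ico 1 s, (e s i).natAbs with hb
  set F : ℕ → Finset ℕ := fun s => (Finset.Ico 1 s).filter (fun i => e s i ≠ 0) with hFdef
  set A : ℕ → Finset ℕ := fun s => insert s ((F s).image (fun i => s - i)) with hAdef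
  set w : ℕ → ℝ := fun s => ((2 : ℝ)⁻¹) ^ (b s) with hwdef
  have hbF : ∀ s, b s = 1 + (F s).card := by
    intro s
    have h1 : ∑ i ∈ F s, (e s i).natAbs = ∑ i ∈ Finset.Ico 1 s, (e s i).natAbs :=
      Finset.sum_filter_of_ne (fun i _ hne h0 => hne (by rw [h0]; rfl))
    have h2 : ∑ i ∈ F s, (e s i).natAbs = (F s).card := by
      rw [Finset.card_eq_sum_ones]
      refine Finset.sum_congr rfl fun i hi => ?_
      have h3 := (Finset.mem_filter.mp hi).2
      rcases he1 s i with h | h | h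
      · rw [h]; rfl
      · exact absurd h h3
      · rw [h]; rfl
    show 1 + ∑ i ∈ Finset.Ico 1 s, (e s i).natAbs = 1 + (F s).card
    omega
  have hb1 : ∀ s, 1 ≤ b s := fun s => by
    show 1 ≤ 1 + ∑ i ∈ Finset.Ico 1 s, (e s i).natAbs
    omega
  -- the good subset of S
  set S' : Set ℕ := {s | s ∈ S ∧ k + 1 ≤ s ∧ ∀ i, e s i ≠ 0 → k + 1 ≤ s - i} with hS'
  have hS'sub : S' ⊆ S := fun s hs => hs.1
  -- S \ S' is finite
  have hwit : ∀ s : ℕ, s ∈ S \ S' → ∃ t,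
      t ∈ (({s} : Set ℕ) ∪ {t | ∃ i, e s i ≠ 0 ∧ t = s - i}) ∧ t ≤ k := by
    intro s hs
    obtain ⟨hs1, hs2⟩ := hs
    rw [hS'] at hs2
    simp only [Set.mem_setOf_eq, not_and, not_forall] at hs2
    by_cases hks : k + 1 ≤ s
    · obtain ⟨i, hi, hik⟩ := hs2 hs1 hks
      exact ⟨s - i, Or.inr ⟨i, hi, rfl⟩, by omega⟩
    · exact ⟨s, Or.inl rfl, by omega⟩
  have hfin : (S \ S').Finite := by
    choose! f hf1 hf2 using hwit
    refine Set.Finite.of_finite_image (f := f) ?_ ?_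
    · exact (Set.finite_Iic k).subset (by rintro t ⟨s, hs, rfl⟩; exact hf2 s hs)
    · intro s hs s' hs' hss
      by_contra hne
      have hd := hsupp hs.1 hs'.1 hne
      rw [Function.onFun, Set.disjoint_left] at hd
      exact hd (hf1 s hs) (hss ▸ hf1 s' hs')
  -- divergence over S'
  have hdiv' : ¬ Summable (S'.indicator w) := by
    intro hsum
    apply hdiv
    have hsplit : S.indicator w = S'.indicator w + (S \ S').indicator w := by
      funext s
      by_cases h1 : s ∈ S'
      · simp [Set.indicator_of_mem h1, Set.indicator_of_mem (hS'sub h1),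
          Set.indicator_of_notMem (fun h : s ∈ S \ S' => h.2 h1)]
      · by_cases h2 : s ∈ S
        · simp [Set.indicator_of_mem h2, Set.indicator_of_notMem h1,
            Set.indicator_of_mem (Set.mem_diff_of_mem h2 h1)]
        · simp [Set.indicator_of_notMem h2, Set.indicator_of_notMem h1,
            Set.indicator_of_notMem (fun h : s ∈ S \ S' => h2 h.1)]
    have : Summable (S.indicator w) := by
      rw [hsplit]
      refine hsum.add (summable_of_ne_finset_zero (s := hfin.toFinset) fun s hs => ?_)
      exact Set.indicator_of_notMem (fun h => hs (hfin.mem_toFinset.mpr h)) w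
    exact this
  have hwnn : ∀ s, 0 ≤ S'.indicator w s :=
    fun s => Set.indicator_nonneg (fun t _ => by positivity) s
  have htend : Tendsto (fun n => ∑ i ∈ Finset.range n, S'.indicator w i) atTop atTop :=
    (not_summable_iff_tendsto_nat_atTop_of_nonneg hwnn).mp hdiv'
  -- the finite block set for each N
  set Q : ℕ → Finset ℕ := fun N => (Finset.Icc (k + 1) (k + N)).filter (fun s => s ∈ S')
    with hQdef
  -- key bound
  have key : ∀ N, pl1 (∏ j ∈ Finset.Icc (k + 1) (k + N), (1 - (X : Polynomial ℝ) ^ g j))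
      ≤ 2 ^ N * ∏ s ∈ Q N, (1 - 2 * w s) := by
    intro N
    have hQS : ∀ s ∈ Q N, s ∈ S' := fun s hs => (Finset.mem_filter.mp hs).2
    have hQIcc : ∀ s ∈ Q N, s ∈ Finset.Icc (k+1) (k+N) := fun s hs =>
      (Finset.mem_filter.mp hs).1
    have hFmem : ∀ s, ∀ i ∈ F s, 1 ≤ i ∧ i < s ∧ e s i ≠ 0 := by
      intro s i hi
      have := Finset.mem_filter.mp hi
      rw [Finset.mem_Ico] at this
      tauto
    have hAsub : ∀ s ∈ Q N, A s ⊆ Finset.Icc (k+1) (k+N) := by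
      intro s hs j hj
      have hsI := Finset.mem_Icc.mp (hQIcc s hs)
      rcases Finset.mem_insert.mp hj with h | h
      · exact h ▸ hQIcc s hs
      · obtain ⟨i, hi, rfl⟩ := Finset.mem_image.mp h
        have h1 := (hFmem s i hi).2.2
        have h2 := (hQS s hs).2.2 i h1
        rw [Finset.mem_Icc]
        omega
    have hAcoe : ∀ s, (A s : Set ℕ) ⊆ ({s} : Set ℕ) ∪ {t | ∃ i, e s i ≠ 0 ∧ t = s - i} := by
      intro s j hj
      rcases Finset.mem_insert.mp hj with h | h
      · exact Or.inl h
      · obtain ⟨i, hi, rfl⟩ := Finset.mem_image.mp h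
        exact Or.inr ⟨i, (hFmem s i hi).2.2, rfl⟩
    have hAdisj : (Q N : Set ℕ).PairwiseDisjoint A := by
      intro s hs s' hs' hne
      have hd := hsupp ((hQS s hs).1) ((hQS s' hs').1) hne
      rw [Function.onFun, Set.disjoint_left] at hd
      rw [Function.onFun, Finset.disjoint_left]
      intro j hj hj'
      exact hd (hAcoe s hj) (hAcoe s' hj')
    set U := (Q N).biUnion A with hUdef
    have hUsub : U ⊆ Finset.Icc (k+1) (k+N) := by
      intro j hj
      obtain ⟨s, hs, hjs⟩ := Finset.mem_biUnion.mp hj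
      exact hAsub s hs hjs
    have hcardA : ∀ s ∈ Q N, (A s).card = b s := by
      intro s hs
      have hinj : Set.InjOn (fun i => s - i) (F s) := by
        intro i hi i' hi' h
        have h1 := (hFmem s i hi).2.1
        have h2 := (hFmem s i' hi').2.1
        simp only [] at h
        omega
      have hnm : s ∉ (F s).image (fun i => s - i) := by
        intro h
        obtain ⟨i, hi, hh⟩ := Finset.mem_image.mp h
        have h1 := (hFmem s i hi).1
        have h2 := (hFmem s i hi).2.1
        omega
      show (insert s ((F s).image (fun i => s - i))).card = b s
      rw [Finset.card_insert_of_notMem hnm, Finset.card_image_of_injOn hinj, hbF s]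
      omega
    have hcardU : U.card = ∑ s ∈ Q N, b s := by
      rw [hUdef, Finset.card_biUnion hAdisj]
      exact Finset.sum_congr rfl hcardA
    have hBN : (∑ s ∈ Q N, b s) ≤ N := by
      have := Finset.card_le_card hUsub
      rw [hcardU] at this
      rw [Nat.card_Icc] at this
      omega
    have hcardsdiff : (Finset.Icc (k+1) (k+N) \ U).card = N - ∑ s ∈ Q N, b s := by
      rw [Finset.card_sdiff_of_subset hUsub, hcardU, Nat.card_Icc]
      omega
    -- split the product
    have hprod : ∏ j ∈ Finset.Icc (k+1) (k+N), (1 - (X : Polynomial ℝ) ^ g j)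
        = (∏ j ∈ Finset.Icc (k+1) (k+N) \ U, (1 - (X : Polynomial ℝ) ^ g j))
          * ∏ s ∈ Q N, ∏ j ∈ A s, (1 - (X : Polynomial ℝ) ^ g j) := by
      rw [← Finset.prod_biUnion hAdisj, ← hUdef, Finset.prod_sdiff hUsub]
    rw [hprod]
    have step1 : pl1 ((∏ j ∈ Finset.Icc (k+1) (k+N) \ U, (1 - (X : Polynomial ℝ) ^ g j))
          * ∏ s ∈ Q N, ∏ j ∈ A s, (1 - (X : Polynomial ℝ) ^ g j))
        ≤ 2 ^ ((Finset.Icc (k+1) (k+N) \ U).card) * ∏ s ∈ Q N, ((2:ℝ) ^ (b s) - 2) := by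
      refine (pl1_mul_le _ _).trans ?_
      refine mul_le_mul ?_ ?_ (pl1_nonneg _) (by positivity)
      · exact pl1_prod_one_sub_le _ _
      · refine (pl1_prod_le _ _).trans ?_
        refine Finset.prod_le_prod (fun s _ => pl1_nonneg _) (fun s hs => ?_)
        have hbl := block_bound g hg s (e s) (he1 s) (hrec s (hQS s hs).1) (hpar s (hQS s hs).1)
        rw [← hbF s] at hbl
        exact hbl
    refine step1.trans (le_of_eq ?_)
    have hfac : ∀ s ∈ Q N, ((2:ℝ) ^ (b s) - 2) = 2 ^ (b s) * (1 - 2 * w s) := by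
      intro s _
      have h1 : (2:ℝ) ^ (b s) * (2⁻¹) ^ (b s) = 1 := by
        rw [← mul_pow]; norm_num
      show ((2:ℝ) ^ (b s) - 2) = 2 ^ (b s) * (1 - 2 * ((2:ℝ)⁻¹) ^ (b s))
      rw [mul_sub, mul_one, show (2:ℝ) ^ (b s) * (2 * (2⁻¹) ^ (b s))
        = 2 * ((2:ℝ) ^ (b s) * (2⁻¹) ^ (b s)) by ring, h1, mul_one]
    rw [Finset.prod_congr rfl hfac, Finset.prod_mul_distrib, Finset.prod_pow_eq_pow_sum,
      hcardsdiff, ← mul_assoc, ← pow_add]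
    congr 2
    omega
  -- each factor is in [0,1]
  have hwle : ∀ s, 2 * w s ≤ 1 := by
    intro s
    show 2 * ((2:ℝ)⁻¹) ^ (b s) ≤ 1
    have : ((2:ℝ)⁻¹) ^ (b s) ≤ ((2:ℝ)⁻¹) ^ 1 :=
      pow_le_pow_of_le_one (by norm_num) (by norm_num) (hb1 s)
    rw [pow_one] at this
    linarith
  have hwpos : ∀ s, 0 ≤ w s := fun s => by positivity
  -- exp bound
  have hexp : ∀ N, ∏ s ∈ Q N, (1 - 2 * w s) ≤ Real.exp (-(2 * ∑ s ∈ Q N, w s)) := by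
    intro N
    have : ∀ s ∈ Q N, (1 - 2 * w s) ≤ Real.exp (-(2 * w s)) := by
      intro s _
      have := Real.add_one_le_exp (-(2 * w s))
      linarith
    refine (Finset.prod_le_prod (fun s _ => by have := hwle s; linarith) this).trans (le_of_eq ?_)
    rw [← Real.exp_sum]
    congr 1
    rw [Finset.mul_sum]
    exact Finset.sum_neg_distrib (f := fun s => 2 * w s)
  -- sum over Q N in terms of partial sums
  have hsumQ : ∀ N, ∑ s ∈ Q N, w s
      = (∑ i ∈ Finset.range (k + N + 1), S'.indicator w i)
        - ∑ i ∈ Finset.range (k + 1), S'.indicator w i := by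
    intro N
    rw [← Finset.sum_Ico_eq_sub _ (by omega)]
    rw [hQdef, Finset.sum_filter]
    have : Finset.Ico (k+1) (k+N+1) = Finset.Icc (k+1) (k+N) := by
      rw [← Finset.Ico_add_one_right_eq_Icc]
    rw [this]
    refine Finset.sum_congr rfl fun s _ => ?_
    rw [Set.indicator_apply]
  -- final squeeze
  have hgoal : Tendsto (fun N => Real.exp (-(2 * ∑ s ∈ Q N, w s))) atTop (nhds 0) := by
    have h1 : Tendsto (fun N => ∑ s ∈ Q N, w s) atTop atTop := by
      have h2 : Tendsto (fun N => ∑ i ∈ Finset.range (k + N + 1), S'.indicator w i)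
          atTop atTop := htend.comp (tendsto_atTop_atTop_of_monotone
            (fun a b hab => by omega) (fun n => ⟨n, by omega⟩))
      have := tendsto_atTop_add_const_right atTop
        (-(∑ i ∈ Finset.range (k + 1), S'.indicator w i)) h2
      refine this.congr fun N => ?_
      rw [hsumQ N]; ring
    have h3 : Tendsto (fun N => -(2 * ∑ s ∈ Q N, w s)) atTop atBot := by
      refine Filter.tendsto_neg_atBot_iff.mpr ?_
      exact (h1.const_mul_atTop (by norm_num : (0:ℝ) < 2))
    exact Real.tendsto_exp_atBot.comp h3
  refine squeeze_zero (fun N => div_nonneg (pl1_nonneg _) (by positivity)) (fun N => ?_) hgoal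
  have hk := key N
  have hx := hexp N
  rw [div_le_iff₀ (by positivity : (0:ℝ) < 2 ^ N)]
  calc pl1 (∏ j ∈ Finset.Icc (k + 1) (k + N), (1 - X ^ g j))
      ≤ 2 ^ N * ∏ s ∈ Q N, (1 - 2 * w s) := hk
    _ ≤ 2 ^ N * Real.exp (-(2 * ∑ s ∈ Q N, w s)) := by
        refine mul_le_mul_of_nonneg_left hx (by positivity)
    _ = Real.exp (-(2 * ∑ s ∈ Q N, w s)) * 2 ^ N := by ring
end
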